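/- Let L < 0 < U with U² ≥ L², let ρ = −L/(U − L), let t* = min{ j ∈ {1,…,K} : ρ > Σ_{t=j+1}^K π_t }, let q*_{t*} = (ρ − Σ_{t=t*+1}^K π_t)/π_{t*}, and R² = (U² − L²)·q*_{t*} + L² > 0. Consider minimizing the objective J(A) = Σ_{t=1}^{t*−1} π_t·L²/A_t + π_{t*}·R²/A_{t*} + Σ_{t=t*+1}^K π_t·U²/A_t over all monotone non-increasing allocation rules A ∈ (0,1]^K with Σ_{t=1}^K π_t·c_t·A_t ≤ B̄, where 0 < B̄ < Σ_{t=1}^K π_t·c_t. Then there exist λ ≥ 0, indices t⁻ ≤ t* ≤ t⁺, and an optimal solution A* of this problem with Σ_{t=1}^K π_t·c_t·A*_t = B̄ such that: A*_t = min(1, √(L²/(λ·c_t))) for all t < t⁻; A*_{t⁻} = A*_{t⁻+1} = ⋯ = A*_{t⁺}; and A*_t = min(1, √(U²/(λ·c_t))) for all t > t⁺. -/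

import Mathlib

private lemma convex_aux (w a b : ℝ) (hw : 0 ≤ w) (ha : 0 < a) (hb : 0 < b) :
    w / a ^ 2 * (a - b) ≤ w / b - w / a := by
  have key : w / b - w / a - w / a ^ 2 * (a - b) = w * (a - b) ^ 2 / (a ^ 2 * b) := by
    field_simp
  nlinarith [div_nonneg (mul_nonneg hw (sq_nonneg (a - b)))
    (le_of_lt (mul_pos (pow_pos ha 2) hb))]

private lemma abel_bound (r x : ℕ → ℝ) (n : ℕ) :
    ∀ a b : ℕ, b = a + n → 1 ≤ n →
    (∀ t, a < t → t < b → x (t + 1) ≤ x t) →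
    (∀ t, a < t → t < b → 0 ≤ ∑ s ∈ Finset.Ioc t b, r s) →
    ∑ t ∈ Finset.Ioc a b, r t * x t ≤ (∑ t ∈ Finset.Ioc a b, r t) * x (a + 1) := by
  induction n with
  | zero => intro a b h h1; omega
  | succ m ih =>
    intro a b hab _ hx hS
    rcases Nat.eq_zero_or_pos m with hm | hm
    · subst hm
      have hb : b = a + 1 := by omega
      subst hb
      rw [show Finset.Ioc a (a + 1) = {a + 1} by rw [Nat.Ioc_succ_singleton]]
      simp
    · have hsplit : ∀ f : ℕ → ℝ, (∑ t ∈ Finset.Ioc a b, f t)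
          = f (a + 1) + ∑ t ∈ Finset.Ioc (a + 1) b, f t := by
        intro f
        rw [← Finset.sum_Ioc_consecutive f (show a ≤ a + 1 by omega) (show a + 1 ≤ b by omega)]
        rw [Nat.Ioc_succ_singleton, Finset.sum_singleton]
      have hb' : b = (a + 1) + m := by omega
      have hx' : ∀ t, a + 1 < t → t < b → x (t + 1) ≤ x t := fun t h1 h2 => hx t (by omega) h2
      have hS' : ∀ t, a + 1 < t → t < b → 0 ≤ ∑ s ∈ Finset.Ioc t b, r s :=
        fun t h1 h2 => hS t (by omega) h2
      have IH := ih (a + 1) b hb' hm hx' hS'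
      have hSpos : 0 ≤ ∑ s ∈ Finset.Ioc (a + 1) b, r s := hS (a + 1) (by omega) (by omega)
      have hxle : x (a + 1 + 1) ≤ x (a + 1) := hx (a + 1) (by omega) (by omega)
      have h2 : (∑ t ∈ Finset.Ioc (a + 1) b, r t) * x (a + 1 + 1)
          ≤ (∑ t ∈ Finset.Ioc (a + 1) b, r t) * x (a + 1) :=
        mul_le_mul_of_nonneg_left hxle hSpos
      rw [hsplit (fun t => r t * x t), hsplit r]
      calc r (a + 1) * x (a + 1) + ∑ t ∈ Finset.Ioc (a + 1) b, r t * x t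
          ≤ r (a + 1) * x (a + 1) + (∑ t ∈ Finset.Ioc (a + 1) b, r t) * x (a + 1 + 1) := by
            linarith
        _ ≤ r (a + 1) * x (a + 1) + (∑ t ∈ Finset.Ioc (a + 1) b, r t) * x (a + 1) := by linarith
        _ = (r (a + 1) + ∑ t ∈ Finset.Ioc (a + 1) b, r t) * x (a + 1) := by ring

set_option maxHeartbeats 1000000 in
private lemma saddle_exists (tstar X : ℕ) (h1 : 1 ≤ tstar) (hX : tstar ≤ X)
    (W C : ℕ → ℕ → ℝ)
    (hWadd : ∀ a m b : ℕ, a ≤ m → m ≤ b → W a m + W m b = W a b)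
    (hCadd : ∀ a m b : ℕ, a ≤ m → m ≤ b → C a m + C m b = C a b)
    (hCpos : ∀ a b : ℕ, a < b → b ≤ X → 0 < C a b) :
    ∃ p, p ≤ tstar - 1 ∧ ∃ q, tstar ≤ q ∧ q ≤ X ∧
      (∀ a, a ≤ tstar - 1 → W p q / C p q ≤ W a q / C a q) ∧
      (∀ b, tstar ≤ b → b ≤ X → W p b / C p b ≤ W p q / C p q) := by
  set F : ℕ → ℕ → ℝ := fun a b => W a b / C a b with hF
  have med_le : ∀ a m b z, a < m → m < b → b ≤ X → F a m ≤ z → F m b ≤ z → F a b ≤ z := by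
    intro a m b z ham hmb hbX h1' h2'
    have c1 := hCpos a m ham (by omega)
    have c2 := hCpos m b hmb hbX
    have c3 := hCpos a b (by omega) hbX
    rw [show F a b = W a b / C a b from rfl, div_le_iff₀ c3,
      ← hWadd a m b (by omega) (by omega), ← hCadd a m b (by omega) (by omega)]
    rw [show F a m = W a m / C a m from rfl, div_le_iff₀ c1] at h1'
    rw [show F m b = W m b / C m b from rfl, div_le_iff₀ c2] at h2'
    have hz : z * (C a m + C m b) = z * C a m + z * C m b := by ring
    linarith
  have med_ge : ∀ a m b z, a < m → m < b → b ≤ X → z ≤ F a m → z ≤ F m b → z ≤ F a b := by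
    intro a m b z ham hmb hbX h1' h2'
    have c1 := hCpos a m ham (by omega)
    have c2 := hCpos m b hmb hbX
    have c3 := hCpos a b (by omega) hbX
    rw [show F a b = W a b / C a b from rfl, le_div_iff₀ c3,
      ← hWadd a m b (by omega) (by omega), ← hCadd a m b (by omega) (by omega)]
    rw [show F a m = W a m / C a m from rfl, le_div_iff₀ c1] at h1'
    rw [show F m b = W m b / C m b from rfl, le_div_iff₀ c2] at h2'
    have hz : z * (C a m + C m b) = z * C a m + z * C m b := by ring
    linarith
  have med_lt1 : ∀ a m b z, a < m → m < b → b ≤ X → F a m < z → F m b ≤ z → F a b < z := by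
    intro a m b z ham hmb hbX h1' h2'
    have c1 := hCpos a m ham (by omega)
    have c2 := hCpos m b hmb hbX
    have c3 := hCpos a b (by omega) hbX
    rw [show F a b = W a b / C a b from rfl, div_lt_iff₀ c3,
      ← hWadd a m b (by omega) (by omega), ← hCadd a m b (by omega) (by omega)]
    rw [show F a m = W a m / C a m from rfl, div_lt_iff₀ c1] at h1'
    rw [show F m b = W m b / C m b from rfl, div_le_iff₀ c2] at h2'
    have hz : z * (C a m + C m b) = z * C a m + z * C m b := by ring
    linarith
  have med_lt2 : ∀ a m b z, a < m → m < b → b ≤ X → F a m ≤ z → F m b < z → F a b < z := by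
    intro a m b z ham hmb hbX h1' h2'
    have c1 := hCpos a m ham (by omega)
    have c2 := hCpos m b hmb hbX
    have c3 := hCpos a b (by omega) hbX
    rw [show F a b = W a b / C a b from rfl, div_lt_iff₀ c3,
      ← hWadd a m b (by omega) (by omega), ← hCadd a m b (by omega) (by omega)]
    rw [show F a m = W a m / C a m from rfl, div_le_iff₀ c1] at h1'
    rw [show F m b = W m b / C m b from rfl, div_lt_iff₀ c2] at h2'
    have hz : z * (C a m + C m b) = z * C a m + z * C m b := by ring
    linarith
  have med_gt1 : ∀ a m b z, a < m → m < b → b ≤ X → z < F a m → z ≤ F m b → z < F a b := by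
    intro a m b z ham hmb hbX h1' h2'
    have c1 := hCpos a m ham (by omega)
    have c2 := hCpos m b hmb hbX
    have c3 := hCpos a b (by omega) hbX
    rw [show F a b = W a b / C a b from rfl, lt_div_iff₀ c3,
      ← hWadd a m b (by omega) (by omega), ← hCadd a m b (by omega) (by omega)]
    rw [show F a m = W a m / C a m from rfl, lt_div_iff₀ c1] at h1'
    rw [show F m b = W m b / C m b from rfl, le_div_iff₀ c2] at h2'
    have hz : z * (C a m + C m b) = z * C a m + z * C m b := by ring
    linarith
  have med_gt2 : ∀ a m b z, a < m → m < b → b ≤ X → z ≤ F a m → z < F m b → z < F a b := by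
    intro a m b z ham hmb hbX h1' h2'
    have c1 := hCpos a m ham (by omega)
    have c2 := hCpos m b hmb hbX
    have c3 := hCpos a b (by omega) hbX
    rw [show F a b = W a b / C a b from rfl, lt_div_iff₀ c3,
      ← hWadd a m b (by omega) (by omega), ← hCadd a m b (by omega) (by omega)]
    rw [show F a m = W a m / C a m from rfl, le_div_iff₀ c1] at h1'
    rw [show F m b = W m b / C m b from rfl, lt_div_iff₀ c2] at h2'
    have hz : z * (C a m + C m b) = z * C a m + z * C m b := by ring
    linarith
  have hBne : (Finset.Icc tstar X).Nonempty := ⟨tstar, by simp [Finset.mem_Icc]; omega⟩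
  set g : ℕ → ℝ := fun a => ((Finset.Icc tstar X).image (fun b => F a b)).max'
    (hBne.image _) with hg
  have hg_le : ∀ a, ∀ b ∈ Finset.Icc tstar X, F a b ≤ g a := by
    intro a b hb
    exact Finset.le_max' _ _ (Finset.mem_image_of_mem _ hb)
  have hg_mem : ∀ a, ∃ b ∈ Finset.Icc tstar X, g a = F a b := by
    intro a
    have := Finset.max'_mem ((Finset.Icc tstar X).image (fun b => F a b)) (hBne.image _)
    rw [Finset.mem_image] at this
    obtain ⟨b, hb, hfb⟩ := this
    exact ⟨b, hb, hfb.symm⟩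
  have hAne : (Finset.Icc 0 (tstar - 1)).Nonempty := ⟨0, by simp⟩
  obtain ⟨p, hpA, hpmin⟩ := Finset.exists_min_image (Finset.Icc 0 (tstar - 1)) g hAne
  obtain ⟨q, hqB, hgq⟩ := hg_mem p
  rw [Finset.mem_Icc] at hpA hqB
  refine ⟨p, hpA.2, q, hqB.1, hqB.2, ?_, ?_⟩
  swap
  · intro b hb1 hb2
    have h := hg_le p b (by rw [Finset.mem_Icc]; exact ⟨hb1, hb2⟩)
    exact le_trans h (le_of_eq hgq)
  · intro a ha
    by_contra hcon
    push_neg at hcon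
    have hcon' : F a q < F p q := hcon
    have hpq : p < q := by omega
    have hga : g p ≤ g a := hpmin a (by rw [Finset.mem_Icc]; omega)
    obtain ⟨b', hb'B, hgab⟩ := hg_mem a
    rw [Finset.mem_Icc] at hb'B
    have hab' : a < b' := by omega
    have hmstar : F p q ≤ F a b' := by rw [← hgab, ← hgq]; exact hga
    have hpb' : F p b' ≤ F p q := by
      have h := hg_le p b' (by rw [Finset.mem_Icc]; exact ⟨hb'B.1, hb'B.2⟩)
      exact le_trans h (le_of_eq hgq)
    rcases lt_trichotomy b' q with hlt | heq | hgt
    · rcases lt_trichotomy a p with hap | hap | hap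
      · have hFap : F a p < F p q := by
          by_contra hc
          push_neg at hc
          have : F p q ≤ F a q := med_ge a p q (F p q) hap hpq hqB.2 hc (le_refl _)
          linarith
        have : F a b' < F p q := med_lt1 a p b' (F p q) hap (by omega) hb'B.2 hFap hpb'
        linarith
      · exact absurd (hap ▸ hcon') (lt_irrefl _)
      · have hFpa : F p q < F p a := by
          by_contra hc
          push_neg at hc
          have : F p q < F p q := med_lt2 p a q (F p q) hap (by omega) hqB.2 hc hcon'
          exact absurd this (lt_irrefl _)
        have : F p q < F p b' := med_gt1 p a b' (F p q) hap (by omega) hb'B.2 hFpa hmstar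
        linarith
    · exact absurd (heq ▸ hmstar) (not_le.mpr hcon')
    · have hFqb : F p q < F q b' := by
        by_contra hc
        push_neg at hc
        have : F a b' < F p q := med_lt1 a q b' (F p q) (by omega) hgt hb'B.2 hcon' hc
        linarith
      have : F p q < F p b' := med_gt2 p q b' (F p q) hpq hgt hb'B.2 (le_refl _) hFqb
      linarith

set_option maxHeartbeats 1600000 in
/-- Form of the optimal allocation for regression: minimizing
`J(A) = Σ_{t<t*} π_t L²/A_t + π_{t*} R²/A_{t*} + Σ_{t>t*} π_t U²/A_t` over monotone
non-increasing budget-feasible allocation rules admits an optimal solution `A*` that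
spends exactly the budget and has the three-region form: below `t⁻` it equals
`min(1, √(L²/(λ c_t)))`, between `t⁻` and `t⁺` it is constant, and above `t⁺` it equals
`min(1, √(U²/(λ c_t)))`, for some `λ ≥ 0` and indices `t⁻ ≤ t* ≤ t⁺`.
Costs are indexed by `{1, …, K}`. -/
theorem regression_optimal_allocation_form
    (K : ℕ) (hK : 1 ≤ K) (c π : ℕ → ℝ)
    (hc : ∀ t ∈ Finset.Icc 1 K, 0 < c t)
    (hcmono : ∀ j ∈ Finset.Icc 1 (K - 1), c j < c (j + 1))
    (hπpos : ∀ t ∈ Finset.Icc 1 K, 0 < π t)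
    (hπsum : ∑ t ∈ Finset.Icc 1 K, π t = 1)
    (L U : ℝ) (hL : L < 0) (hU : 0 < U) (hLU : L ^ 2 ≤ U ^ 2)
    (ρ : ℝ) (hρ : ρ = -L / (U - L))
    (tstar : ℕ) (htstar_mem : tstar ∈ Finset.Icc 1 K)
    (htstar_prop : ρ > ∑ t ∈ Finset.Icc (tstar + 1) K, π t)
    (htstar_min : ∀ j ∈ Finset.Icc 1 K,
      (ρ > ∑ t ∈ Finset.Icc (j + 1) K, π t) → tstar ≤ j)
    (qstar R2 : ℝ)
    (hqstar : qstar = (ρ - ∑ t ∈ Finset.Icc (tstar + 1) K, π t) / π tstar)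
    (hR2 : R2 = (U ^ 2 - L ^ 2) * qstar + L ^ 2)
    (Bbar : ℝ) (hBbar_pos : 0 < Bbar)
    (hBbar_ub : Bbar < ∑ t ∈ Finset.Icc 1 K, π t * c t)
    (J : (ℕ → ℝ) → ℝ)
    (hJ : ∀ A : ℕ → ℝ,
      J A = (∑ t ∈ Finset.Icc 1 (tstar - 1), π t * L ^ 2 / A t)
        + π tstar * R2 / A tstar
        + ∑ t ∈ Finset.Icc (tstar + 1) K, π t * U ^ 2 / A t) :
    ∃ lam : ℝ, 0 ≤ lam ∧
    ∃ tminus tplus : ℕ, 1 ≤ tminus ∧ tminus ≤ tstar ∧ tstar ≤ tplus ∧ tplus ≤ K ∧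
    ∃ Astar : ℕ → ℝ,
      (∀ t ∈ Finset.Icc 1 K, 0 < Astar t ∧ Astar t ≤ 1) ∧
      (∀ s ∈ Finset.Icc 1 K, ∀ t ∈ Finset.Icc 1 K, s ≤ t → Astar t ≤ Astar s) ∧
      (∑ t ∈ Finset.Icc 1 K, π t * c t * Astar t = Bbar) ∧
      (∀ A' : ℕ → ℝ, (∀ t ∈ Finset.Icc 1 K, 0 < A' t ∧ A' t ≤ 1) →
        (∀ s ∈ Finset.Icc 1 K, ∀ t ∈ Finset.Icc 1 K, s ≤ t → A' t ≤ A' s) →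
        (∑ t ∈ Finset.Icc 1 K, π t * c t * A' t ≤ Bbar) →
        J Astar ≤ J A') ∧
      (∀ t ∈ Finset.Icc 1 K, t < tminus →
        Astar t = min 1 (Real.sqrt (L ^ 2 / (lam * c t)))) ∧
      (∀ t ∈ Finset.Icc 1 K, tminus ≤ t → t ≤ tplus → Astar t = Astar tstar) ∧
      (∀ t ∈ Finset.Icc 1 K, tplus < t →
        Astar t = min 1 (Real.sqrt (U ^ 2 / (lam * c t)))) := by
  rw [Finset.mem_Icc] at htstar_mem
  obtain ⟨ht1, htK⟩ := htstar_mem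
  have hIccIoc : Finset.Icc 1 K = Finset.Ioc 0 K := by rw [← Finset.Icc_add_one_left_eq_Ioc, zero_add]
  have hLne : L ≠ 0 := ne_of_lt hL
  have hL2 : (0:ℝ) < L ^ 2 := by positivity
  have hU2 : (0:ℝ) < U ^ 2 := by positivity
  have hcpos : ∀ t, 1 ≤ t → t ≤ K → 0 < c t := fun t h1 h2 =>
    hc t (by rw [Finset.mem_Icc]; omega)
  have hπpos' : ∀ t, 1 ≤ t → t ≤ K → 0 < π t := fun t h1 h2 =>
    hπpos t (by rw [Finset.mem_Icc]; omega)
  have hcmono' : ∀ i j, 1 ≤ i → i ≤ j → j ≤ K → c i ≤ c j := by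
    intro i j hi hij hjK
    induction j with
    | zero => omega
    | succ m ihm =>
      rcases Nat.lt_or_ge i (m + 1) with hlt | hge
      · have him : i ≤ m := by omega
        have h1 : c i ≤ c m := ihm (by omega) (by omega)
        have h2 : c m < c (m + 1) := hcmono m (by rw [Finset.mem_Icc]; omega)
        linarith
      · have : i = m + 1 := by omega
        subst this; rfl
  have hR2pos : (0:ℝ) < R2 := by
    have hq : 0 ≤ qstar := by
      rw [hqstar]
      apply div_nonneg (by linarith [htstar_prop]) (hπpos' tstar ht1 htK).le
    rw [hR2]; nlinarith
  set w : ℕ → ℝ := fun t => if t < tstar then L ^ 2 else if t = tstar then R2 else U ^ 2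
    with hwdef
  have hwpos : ∀ t, 0 < w t := by
    intro t; simp only [hwdef]
    split_ifs <;> assumption
  set Wf : ℕ → ℕ → ℝ := fun a b => ∑ t ∈ Finset.Ioc a b, π t * w t with hWfdef
  set Cf : ℕ → ℕ → ℝ := fun a b => ∑ t ∈ Finset.Ioc a b, π t * c t with hCfdef
  have hWadd : ∀ a m b : ℕ, a ≤ m → m ≤ b → Wf a m + Wf m b = Wf a b :=
    fun a m b h1 h2 => Finset.sum_Ioc_consecutive _ h1 h2
  have hCadd : ∀ a m b : ℕ, a ≤ m → m ≤ b → Cf a m + Cf m b = Cf a b :=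
    fun a m b h1 h2 => Finset.sum_Ioc_consecutive _ h1 h2
  have hCpos : ∀ a b : ℕ, a < b → b ≤ K → 0 < Cf a b := by
    intro a b hab hbK
    apply Finset.sum_pos
    · intro t ht; rw [Finset.mem_Ioc] at ht
      exact mul_pos (hπpos' t (by omega) (by omega)) (hcpos t (by omega) (by omega))
    · exact ⟨b, by rw [Finset.mem_Ioc]; omega⟩
  have hWpos : ∀ a b : ℕ, a < b → b ≤ K → 0 < Wf a b := by
    intro a b hab hbK
    apply Finset.sum_pos
    · intro t ht; rw [Finset.mem_Ioc] at ht
      exact mul_pos (hπpos' t (by omega) (by omega)) (hwpos t)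
    · exact ⟨b, by rw [Finset.mem_Ioc]; omega⟩
  obtain ⟨p, hp, q, hq1, hq2, hsadA, hsadB⟩ :=
    saddle_exists tstar K ht1 htK Wf Cf hWadd hCadd hCpos
  have hptstar : p < tstar := by omega
  set Ms : ℝ := Wf p q / Cf p q with hMsdef
  have hpq : p < q := by omega
  have hCpq : 0 < Cf p q := hCpos p q hpq hq2
  have hMspos : 0 < Ms := div_pos (hWpos p q hpq hq2) hCpq
  have hWCeq : Wf p q = Ms * Cf p q := by
    rw [hMsdef]; field_simp
  have hIoc1 : ∀ a b : ℕ, b = a + 1 → Finset.Ioc a b = {b} := by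
    intro a b hab; ext z; simp only [Finset.mem_Ioc, Finset.mem_singleton]; omega
  have hWone : ∀ a b : ℕ, b = a + 1 → Wf a b = π b * w b := by
    intro a b hab
    simp only [hWfdef]
    rw [hIoc1 a b hab, Finset.sum_singleton]
  have hCone : ∀ a b : ℕ, b = a + 1 → Cf a b = π b * c b := by
    intro a b hab
    simp only [hCfdef]
    rw [hIoc1 a b hab, Finset.sum_singleton]
  -- boundary fact: Ms * c p ≤ L ^ 2 when 1 ≤ p
  have hbdL : 1 ≤ p → Ms * c p ≤ L ^ 2 := by
    intro hp1
    have hA := hsadA (p - 1) (by omega)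
    have hCp : 0 < Cf (p - 1) q := hCpos (p - 1) q (by omega) hq2
    rw [le_div_iff₀ hCp] at hA
    have hsplitW : Wf (p - 1) q = π p * w p + Wf p q := by
      rw [← hWadd (p - 1) p q (by omega) (by omega), hWone (p - 1) p (by omega)]
    have hsplitC : Cf (p - 1) q = π p * c p + Cf p q := by
      rw [← hCadd (p - 1) p q (by omega) (by omega), hCone (p - 1) p (by omega)]
    have hwp : w p = L ^ 2 := if_pos hptstar
    rw [hsplitW, hsplitC, hwp] at hA
    have hπp : 0 < π p := hπpos' p (by omega) (by omega)
    rw [← mul_le_mul_iff_right₀ hπp]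
    nlinarith [hWCeq]
  -- boundary fact: U ^ 2 ≤ Ms * c (q + 1) when q < K
  have hups : q < K → U ^ 2 ≤ Ms * c (q + 1) := by
    intro hqK
    have hB := hsadB (q + 1) (by omega) (by omega)
    have hCq : 0 < Cf p (q + 1) := hCpos p (q + 1) (by omega) (by omega)
    rw [div_le_iff₀ hCq] at hB
    have hsplitW : Wf p (q + 1) = Wf p q + π (q + 1) * w (q + 1) := by
      rw [← hWadd p q (q + 1) (by omega) (by omega), hWone q (q + 1) rfl]
    have hsplitC : Cf p (q + 1) = Cf p q + π (q + 1) * c (q + 1) := by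
      rw [← hCadd p q (q + 1) (by omega) (by omega), hCone q (q + 1) rfl]
    have hwq : w (q + 1) = U ^ 2 := by
      simp only [hwdef]
      rw [if_neg (by omega), if_neg (by omega)]
    rw [hsplitW, hsplitC, hwq] at hB
    have hπq : 0 < π (q + 1) := hπpos' (q + 1) (by omega) (by omega)
    rw [← mul_le_mul_iff_right₀ hπq]
    nlinarith [hWCeq]
  -- fact: Ms * c s ≤ U ^ 2 for tstar < s ≤ q
  have hUc : ∀ s, tstar < s → s ≤ q → Ms * c s ≤ U ^ 2 := by
    intro s hs1 hs2
    have hq' : tstar < q := by omega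
    have hMcq : Ms * c q ≤ U ^ 2 := by
      have hB := hsadB (q - 1) (by omega) (by omega)
      have hCq : 0 < Cf p (q - 1) := hCpos p (q - 1) (by omega) (by omega)
      rw [div_le_iff₀ hCq] at hB
      have hsplitW : Wf p q = Wf p (q - 1) + π q * w q := by
        rw [← hWadd p (q - 1) q (by omega) (by omega), hWone (q - 1) q (by omega)]
      have hsplitC : Cf p q = Cf p (q - 1) + π q * c q := by
        rw [← hCadd p (q - 1) q (by omega) (by omega), hCone (q - 1) q (by omega)]
      have hwq : w q = U ^ 2 := by
        simp only [hwdef]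
        rw [if_neg (by omega), if_neg (by omega)]
      have hπq : 0 < π q := hπpos' q (by omega) (by omega)
      have hWC2 := hWCeq
      rw [hsplitW, hsplitC, hwq] at hWC2
      rw [← mul_le_mul_iff_right₀ hπq]
      nlinarith [hB]
    have hcs : c s ≤ c q := hcmono' s q (by omega) (by omega) hq2
    calc Ms * c s ≤ Ms * c q := mul_le_mul_of_nonneg_left hcs hMspos.le
      _ ≤ U ^ 2 := hMcq
  -- key sum inequality: Ms * Cf a q ≤ Wf a q for p ≤ a < q
  have hWMs : ∀ a, p ≤ a → a < q → Ms * Cf a q ≤ Wf a q := by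
    intro a ha1 ha2
    rcases Nat.lt_or_ge a tstar with hlt | hge
    · have hA := hsadA a (by omega)
      have hCa : 0 < Cf a q := hCpos a q (by omega) hq2
      rw [le_div_iff₀ hCa] at hA
      exact hA
    · have hterm : ∀ t ∈ Finset.Ioc a q, Ms * (π t * c t) ≤ π t * w t := by
        intro t ht
        rw [Finset.mem_Ioc] at ht
        have hwt : w t = U ^ 2 := by
          simp only [hwdef]
          rw [if_neg (by omega), if_neg (by omega)]
        rw [hwt]
        have h1 := hUc t (by omega) (by omega)
        have hπt : 0 < π t := hπpos' t (by omega) (by omega)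
        nlinarith
      calc Ms * Cf a q = ∑ t ∈ Finset.Ioc a q, Ms * (π t * c t) := by
            simp only [hCfdef]; rw [Finset.mul_sum]
        _ ≤ ∑ t ∈ Finset.Ioc a q, π t * w t := Finset.sum_le_sum hterm
        _ = Wf a q := rfl
  -- the parametric allocation
  set k : ℕ → ℝ := fun t => if t < p + 1 then L ^ 2 / c t else if t ≤ q then Ms
    else U ^ 2 / c t with hkdef
  have hkpos : ∀ t, 1 ≤ t → t ≤ K → 0 < k t := by
    intro t h1 h2
    have := hcpos t h1 h2
    simp only [hkdef]
    split_ifs <;> positivity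
  have hkadj : ∀ t, 1 ≤ t → t < K → k (t + 1) ≤ k t := by
    intro t h1 h2
    have hct : 0 < c t := hcpos t h1 (by omega)
    have hct1 : 0 < c (t + 1) := hcpos (t + 1) (by omega) (by omega)
    have hcc : c t ≤ c (t + 1) := (hcmono t (by rw [Finset.mem_Icc]; omega)).le
    rcases Nat.lt_or_ge (t + 1) (p + 1) with hA | hA
    · -- both prefix
      simp only [hkdef]
      rw [if_pos hA, if_pos (by omega)]
      rw [div_le_div_iff₀ hct1 hct]
      nlinarith
    · rcases Nat.eq_or_lt_of_le hA with hB | hB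
      · -- t = p
        have htp : t = p := by omega
        simp only [hkdef]
        rw [if_neg (by omega), if_pos (by omega), if_pos (by omega)]
        subst htp
        rw [le_div_iff₀ hct]
        exact hbdL (by omega)
      · rcases Nat.lt_or_ge t q with hC | hC
        · rcases Nat.lt_or_ge (t + 1) (q + 1) with hD | hD
          · -- both block
            simp only [hkdef]
            rw [if_neg (by omega), if_pos (by omega), if_neg (by omega), if_pos (by omega)]
          · omega
        · rcases Nat.eq_or_lt_of_le hC with hD | hD
          · -- t = q
            have htq : t = q := hD.symm
            simp only [hkdef]
            rw [if_neg (by omega), if_neg (by omega), if_neg (by omega), if_pos (by omega)]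
            subst htq
            rw [div_le_iff₀ hct1]
            exact hups (by omega)
          · -- both suffix
            simp only [hkdef]
            rw [if_neg (by omega), if_neg (by omega), if_neg (by omega), if_neg (by omega)]
            rw [div_le_div_iff₀ hct1 hct]
            nlinarith
  have hkmono : ∀ i j, 1 ≤ i → i ≤ j → j ≤ K → k j ≤ k i := by
    intro i j hi hij hjK
    induction j with
    | zero => omega
    | succ m ihm =>
      rcases Nat.lt_or_ge i (m + 1) with hlt | hge
      · have h1 : k m ≤ k i := ihm (by omega) (by omega)
        have h2 : k (m + 1) ≤ k m := hkadj m (by omega) (by omega)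
        linarith
      · have : i = m + 1 := by omega
        subst this; rfl
  -- find lam by IVT
  have hKne : (Finset.Icc 1 K).Nonempty := ⟨1, by rw [Finset.mem_Icc]; omega⟩
  set lam0 : ℝ := ((Finset.Icc 1 K).image k).min' (hKne.image k) with hlam0def
  have hlam0pos : 0 < lam0 := by
    have hmem := Finset.min'_mem ((Finset.Icc 1 K).image k) (hKne.image k)
    rw [Finset.mem_image] at hmem
    obtain ⟨t, ht, hkt⟩ := hmem
    rw [Finset.mem_Icc] at ht
    rw [hlam0def, ← hkt]
    exact hkpos t ht.1 ht.2
  have hlam0le : ∀ t, 1 ≤ t → t ≤ K → lam0 ≤ k t := by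
    intro t h1 h2
    exact Finset.min'_le _ _ (Finset.mem_image_of_mem k (by rw [Finset.mem_Icc]; omega))
  set T : ℝ := ∑ t ∈ Finset.Icc 1 K, π t * c t * Real.sqrt (k t) with hTdef
  have hTpos : 0 < T := by
    apply Finset.sum_pos
    · intro t ht
      rw [Finset.mem_Icc] at ht
      have := hkpos t ht.1 ht.2
      have := hπpos' t ht.1 ht.2
      have := hcpos t ht.1 ht.2
      positivity
    · exact hKne
  set lam1 : ℝ := lam0 + (T / Bbar) ^ 2 + 1 with hlam1def
  have hl01 : lam0 ≤ lam1 := by rw [hlam1def]; nlinarith [sq_nonneg (T / Bbar)]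
  set φ : ℝ → ℝ := fun l => ∑ t ∈ Finset.Icc 1 K, π t * c t * min 1 (Real.sqrt (k t / l))
    with hφdef
  have hφ0 : Bbar ≤ φ lam0 := by
    have : φ lam0 = ∑ t ∈ Finset.Icc 1 K, π t * c t := by
      apply Finset.sum_congr rfl
      intro t ht
      rw [Finset.mem_Icc] at ht
      have h1 : (1:ℝ) ≤ k t / lam0 := (one_le_div hlam0pos).mpr (hlam0le t ht.1 ht.2)
      have h2 : (1:ℝ) ≤ Real.sqrt (k t / lam0) := by
        rw [show (1:ℝ) = Real.sqrt 1 from (Real.sqrt_one).symm]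
        exact Real.sqrt_le_sqrt h1
      rw [min_eq_left h2, mul_one]
    rw [this]
    exact hBbar_ub.le
  have hφ1 : φ lam1 ≤ Bbar := by
    have hlam1pos : 0 < lam1 := lt_of_lt_of_le hlam0pos hl01
    have hsq1 : Real.sqrt lam1 > 0 := Real.sqrt_pos.mpr hlam1pos
    have step1 : φ lam1 ≤ T / Real.sqrt lam1 := by
      rw [hφdef, hTdef, Finset.sum_div]
      apply Finset.sum_le_sum
      intro t ht
      rw [Finset.mem_Icc] at ht
      have hkt := hkpos t ht.1 ht.2
      have hπt := hπpos' t ht.1 ht.2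
      have hctt := hcpos t ht.1 ht.2
      have : min 1 (Real.sqrt (k t / lam1)) ≤ Real.sqrt (k t) / Real.sqrt lam1 := by
        rw [← Real.sqrt_div hkt.le]
        exact min_le_right _ _
      calc π t * c t * min 1 (Real.sqrt (k t / lam1))
          ≤ π t * c t * (Real.sqrt (k t) / Real.sqrt lam1) := by
            apply mul_le_mul_of_nonneg_left this (by positivity)
        _ = π t * c t * Real.sqrt (k t) / Real.sqrt lam1 := by ring
    have step2 : T / Real.sqrt lam1 ≤ Bbar := by
      rw [div_le_iff₀ hsq1]
      have h1 : T / Bbar ≤ Real.sqrt lam1 := by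
        rw [show T / Bbar = Real.sqrt ((T / Bbar) ^ 2) from
          (Real.sqrt_sq (by positivity)).symm]
        apply Real.sqrt_le_sqrt
        rw [hlam1def]
        nlinarith [hlam0pos]
      calc T = Bbar * (T / Bbar) := by field_simp
        _ ≤ Bbar * Real.sqrt lam1 := by
            apply mul_le_mul_of_nonneg_left h1 hBbar_pos.le
    linarith
  have hφcont : ContinuousOn φ (Set.Icc lam0 lam1) := by
    apply continuousOn_finset_sum
    intro t ht
    apply ContinuousOn.mul continuousOn_const
    apply ContinuousOn.inf continuousOn_const
    apply ContinuousOn.sqrt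
    apply ContinuousOn.div continuousOn_const continuousOn_id
    intro x hx
    exact ne_of_gt (lt_of_lt_of_le hlam0pos hx.1)
  obtain ⟨lam, hlammem, hlameq⟩ : ∃ lam ∈ Set.Icc lam0 lam1, φ lam = Bbar := by
    have hsub := intermediate_value_Icc' hl01 hφcont
    have hmem : Bbar ∈ Set.Icc (φ lam1) (φ lam0) := ⟨hφ1, hφ0⟩
    obtain ⟨lam, h1, h2⟩ := hsub hmem
    exact ⟨lam, h1, h2⟩
  have hlampos : 0 < lam := lt_of_lt_of_le hlam0pos hlammem.1
  -- the allocation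
  set Astar : ℕ → ℝ := fun t => min 1 (Real.sqrt (k t / lam)) with hAstardef
  have hAstar_pos : ∀ t, 1 ≤ t → t ≤ K → 0 < Astar t := by
    intro t h1 h2
    have := hkpos t h1 h2
    exact lt_min one_pos (Real.sqrt_pos.mpr (by positivity))
  have hAstar_le1 : ∀ t, Astar t ≤ 1 := fun t => min_le_left _ _
  have hAstar_mono : ∀ s t, 1 ≤ s → s ≤ t → t ≤ K → Astar t ≤ Astar s := by
    intro s t h1 h2 h3
    apply min_le_min le_rfl
    have hks : k t ≤ k s := hkmono s t h1 h2 h3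
    gcongr
  -- block value
  set v : ℝ := min 1 (Real.sqrt (Ms / lam)) with hvdef
  have hkblock : ∀ t, p < t → t ≤ q → k t = Ms := by
    intro t h1 h2
    simp only [hkdef]
    rw [if_neg (by omega), if_pos h2]
  have hvAstar : ∀ t, p < t → t ≤ q → Astar t = v := by
    intro t h1 h2
    simp only [hAstardef, hvdef, hkblock t h1 h2]
  have hvpos : 0 < v := by
    rw [hvdef]
    exact lt_min one_pos (Real.sqrt_pos.mpr (by positivity))
  have hv2 : v ^ 2 ≤ Ms / lam := by
    have h1 : v ≤ Real.sqrt (Ms / lam) := min_le_right _ _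
    calc v ^ 2 ≤ (Real.sqrt (Ms / lam)) ^ 2 := pow_le_pow_left₀ hvpos.le h1 2
      _ = Ms / lam := Real.sq_sqrt (by positivity)
  have hv2' : v ^ 2 * lam ≤ Ms := (le_div_iff₀ hlampos).mp hv2
  -- J in terms of w
  have hJw : ∀ A : ℕ → ℝ, J A = ∑ t ∈ Finset.Ioc 0 K, π t * w t / A t := by
    intro A
    rw [hJ A]
    rw [show Finset.Icc 1 (tstar - 1) = Finset.Ioc 0 (tstar - 1) from by
      rw [← Finset.Icc_add_one_left_eq_Ioc, zero_add]]
    rw [show Finset.Icc (tstar + 1) K = Finset.Ioc tstar K from by rw [← Finset.Icc_add_one_left_eq_Ioc]]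
    rw [← Finset.sum_Ioc_consecutive (fun t => π t * w t / A t) (Nat.zero_le tstar) htK]
    rw [← Finset.sum_Ioc_consecutive (fun t => π t * w t / A t)
      (Nat.zero_le (tstar - 1)) (show tstar - 1 ≤ tstar by omega)]
    rw [show Finset.Ioc (tstar - 1) tstar = {tstar} from hIoc1 _ _ (by omega)]
    rw [Finset.sum_singleton]
    have e1 : ∑ t ∈ Finset.Ioc 0 (tstar - 1), π t * L ^ 2 / A t
        = ∑ t ∈ Finset.Ioc 0 (tstar - 1), π t * w t / A t := by
      apply Finset.sum_congr rfl
      intro t ht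
      rw [Finset.mem_Ioc] at ht
      rw [show w t = L ^ 2 from if_pos (by omega)]
    have e2 : π tstar * R2 / A tstar = π tstar * w tstar / A tstar := by
      rw [show w tstar = R2 from by simp only [hwdef]; rw [if_neg (by omega)]; simp]
    have e3 : ∑ t ∈ Finset.Ioc tstar K, π t * U ^ 2 / A t
        = ∑ t ∈ Finset.Ioc tstar K, π t * w t / A t := by
      apply Finset.sum_congr rfl
      intro t ht
      rw [Finset.mem_Ioc] at ht
      rw [show w t = U ^ 2 from by
        simp only [hwdef]; rw [if_neg (by omega), if_neg (by omega)]]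
    rw [e1, e2, e3]
  -- budget
  have hbudget : ∑ t ∈ Finset.Icc 1 K, π t * c t * Astar t = Bbar := by
    rw [← hlameq]
  have hbudget' : ∑ t ∈ Finset.Ioc 0 K, π t * c t * Astar t = Bbar := by
    rw [← hIccIoc]; exact hbudget
  -- optimality
  have hopt : ∀ A' : ℕ → ℝ, (∀ t ∈ Finset.Icc 1 K, 0 < A' t ∧ A' t ≤ 1) →
      (∀ s ∈ Finset.Icc 1 K, ∀ t ∈ Finset.Icc 1 K, s ≤ t → A' t ≤ A' s) →
      (∑ t ∈ Finset.Icc 1 K, π t * c t * A' t ≤ Bbar) → J Astar ≤ J A' := by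
    intro A' hA'pos hA'mono hA'bud
    have hA'pos' : ∀ t, 1 ≤ t → t ≤ K → 0 < A' t := fun t h1 h2 =>
      (hA'pos t (by rw [Finset.mem_Icc]; omega)).1
    have hA'le1 : ∀ t, 1 ≤ t → t ≤ K → A' t ≤ 1 := fun t h1 h2 =>
      (hA'pos t (by rw [Finset.mem_Icc]; omega)).2
    have hA'mono' : ∀ s t, 1 ≤ s → s ≤ t → t ≤ K → A' t ≤ A' s := fun s t h1 h2 h3 =>
      hA'mono s (by rw [Finset.mem_Icc]; omega) t (by rw [Finset.mem_Icc]; omega) h2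
    set r : ℕ → ℝ := fun t => π t * w t / (Astar t) ^ 2 - lam * (π t * c t) with hrdef
    have hconv : ∑ t ∈ Finset.Ioc 0 K, (π t * w t / (Astar t) ^ 2) * (Astar t - A' t)
        ≤ J A' - J Astar := by
      rw [hJw A', hJw Astar, ← Finset.sum_sub_distrib]
      apply Finset.sum_le_sum
      intro t ht
      rw [Finset.mem_Ioc] at ht
      have h1 := hAstar_pos t (by omega) ht.2
      have h2 := hA'pos' t (by omega) ht.2
      have h3 : 0 ≤ π t * w t := le_of_lt (mul_pos (hπpos' t (by omega) ht.2) (hwpos t))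
      exact convex_aux (π t * w t) (Astar t) (A' t) h3 h1 h2
    have hdecomp : ∑ t ∈ Finset.Ioc 0 K, (π t * w t / (Astar t) ^ 2) * (Astar t - A' t)
        = lam * ((∑ t ∈ Finset.Ioc 0 K, π t * c t * Astar t)
            - ∑ t ∈ Finset.Ioc 0 K, π t * c t * A' t)
          + ∑ t ∈ Finset.Ioc 0 K, r t * (Astar t - A' t) := by
      rw [← Finset.sum_sub_distrib, Finset.mul_sum, ← Finset.sum_add_distrib]
      apply Finset.sum_congr rfl
      intro t ht
      simp only [hrdef]
      ring
    have hbud1 : ∑ t ∈ Finset.Ioc 0 K, π t * c t * A' t ≤ Bbar := by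
      rw [← hIccIoc]; exact hA'bud
    have hterm1 : 0 ≤ lam * ((∑ t ∈ Finset.Ioc 0 K, π t * c t * Astar t)
        - ∑ t ∈ Finset.Ioc 0 K, π t * c t * A' t) := by
      apply mul_nonneg hlampos.le
      rw [hbudget']
      linarith
    have houtside : ∀ t, 1 ≤ t → t ≤ K → (t ≤ p ∨ q < t) → 0 ≤ r t * (Astar t - A' t) := by
      intro t h1 h2 hcase
      have hct : 0 < c t := hcpos t h1 h2
      have hπt : 0 < π t := hπpos' t h1 h2
      have hwt : 0 < w t := hwpos t
      have hwk : k t = w t / c t := by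
        rcases hcase with hl | hr
        · simp only [hkdef, hwdef]
          rw [if_pos (by omega), if_pos (by omega)]
        · simp only [hkdef, hwdef]
          rw [if_neg (by omega), if_neg (by omega), if_neg (by omega), if_neg (by omega)]
      have hkt : 0 < k t := hkpos t h1 h2
      rcases le_or_gt 1 (Real.sqrt (k t / lam)) with hge | hlt
      · have hast : Astar t = 1 := by
          simp only [hAstardef]; exact min_eq_left hge
        have hk1 : lam ≤ k t := by
          have h0 : (0:ℝ) ≤ k t / lam := by positivity
          have h1 : (1:ℝ) ≤ k t / lam := by
            calc (1:ℝ) = 1 * 1 := by ring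
              _ ≤ Real.sqrt (k t / lam) * Real.sqrt (k t / lam) :=
                  mul_le_mul hge hge zero_le_one (Real.sqrt_nonneg _)
              _ = k t / lam := Real.mul_self_sqrt h0
          exact (one_le_div hlampos).mp h1
        have hlc : lam * c t ≤ w t := by
          rw [hwk, le_div_iff₀ hct] at hk1
          linarith
        have hr0 : 0 ≤ r t := by
          simp only [hrdef]
          rw [hast]
          have e : π t * w t / (1:ℝ) ^ 2 = π t * w t := by norm_num
          rw [e]
          linarith [mul_le_mul_of_nonneg_left hlc hπt.le]
        apply mul_nonneg hr0
        rw [hast]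
        linarith [hA'le1 t h1 h2]
      · have hast : Astar t = Real.sqrt (k t / lam) := by
          simp only [hAstardef]; exact min_eq_right hlt.le
        have hsq : (Astar t) ^ 2 = k t / lam := by
          rw [hast]; exact Real.sq_sqrt (by positivity)
        have hr0 : r t = 0 := by
          simp only [hrdef]
          rw [hsq, hwk]
          field_simp
          ring
        rw [hr0, zero_mul]
    have hblocksum : ∀ a, p ≤ a → a < q → ∑ s ∈ Finset.Ioc a q, r s
        = Wf a q / v ^ 2 - lam * Cf a q := by
      intro a ha1 ha2
      have e : ∀ s ∈ Finset.Ioc a q, r s = π s * w s / v ^ 2 - lam * (π s * c s) := by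
        intro s hs
        rw [Finset.mem_Ioc] at hs
        simp only [hrdef]
        rw [hvAstar s (by omega) hs.2]
      rw [Finset.sum_congr rfl e, Finset.sum_sub_distrib]
      congr 1
      · simp only [hWfdef]
        rw [← Finset.sum_div]
      · simp only [hCfdef]
        rw [← Finset.mul_sum]
    have hSnn : ∀ a, p ≤ a → a < q → 0 ≤ ∑ s ∈ Finset.Ioc a q, r s := by
      intro a ha1 ha2
      rw [hblocksum a ha1 ha2]
      have hWa := hWMs a ha1 ha2
      have hCa : 0 < Cf a q := hCpos a q (by omega) hq2
      have hWp : 0 < Wf a q := hWpos a q (by omega) hq2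
      have h1 : Wf a q * lam / Ms ≤ Wf a q / v ^ 2 := by
        rw [div_le_div_iff₀ hMspos (by positivity)]
        have := mul_le_mul_of_nonneg_left hv2' hWp.le
        linarith
      have h2 : lam * Cf a q ≤ Wf a q * lam / Ms := by
        rw [le_div_iff₀ hMspos]
        have := mul_le_mul_of_nonneg_left hWa hlampos.le
        linarith
      linarith
    have hblock : 0 ≤ ∑ t ∈ Finset.Ioc p q, r t * (Astar t - A' t) := by
      have hx : ∑ t ∈ Finset.Ioc p q, r t * (Astar t - A' t)
          = - ∑ t ∈ Finset.Ioc p q, r t * (A' t - v) := by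
        rw [← Finset.sum_neg_distrib]
        apply Finset.sum_congr rfl
        intro t ht
        rw [Finset.mem_Ioc] at ht
        rw [hvAstar t ht.1 ht.2]
        ring
      rw [hx, neg_nonneg]
      have habel := abel_bound r (fun t => A' t - v) (q - p) p q (by omega) (by omega)
        (fun t h1 h2 => by
          have := hA'mono' t (t + 1) (by omega) (by omega) (by omega)
          linarith)
        (fun t h1 h2 => hSnn t (by omega) h2)
      refine le_trans habel ?_
      have hsum := hblocksum p (le_refl p) hpq
      rcases le_or_gt 1 (Real.sqrt (Ms / lam)) with hge | hlt
      · have hveq : v = 1 := by rw [hvdef]; exact min_eq_left hge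
        have hrs : 0 ≤ ∑ s ∈ Finset.Ioc p q, r s := hSnn p (le_refl p) hpq
        have hA'le : A' (p + 1) - v ≤ 0 := by
          rw [hveq]
          have := hA'le1 (p + 1) (by omega) (by omega)
          linarith
        have h := mul_nonneg hrs (neg_nonneg.mpr hA'le)
        linarith
      · have hveq : v = Real.sqrt (Ms / lam) := by rw [hvdef]; exact min_eq_right hlt.le
        have hv2eq : v ^ 2 = Ms / lam := by rw [hveq]; exact Real.sq_sqrt (by positivity)
        have hz : ∑ s ∈ Finset.Ioc p q, r s = 0 := by
          rw [hsum, hv2eq, hWCeq]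
          field_simp
          ring
        rw [hz, zero_mul]
    have hsplit3 : ∑ t ∈ Finset.Ioc 0 K, r t * (Astar t - A' t)
        = (∑ t ∈ Finset.Ioc 0 p, r t * (Astar t - A' t))
          + (∑ t ∈ Finset.Ioc p q, r t * (Astar t - A' t))
          + ∑ t ∈ Finset.Ioc q K, r t * (Astar t - A' t) := by
      rw [← Finset.sum_Ioc_consecutive (fun t => r t * (Astar t - A' t)) (Nat.zero_le q) hq2,
        ← Finset.sum_Ioc_consecutive (fun t => r t * (Astar t - A' t)) (Nat.zero_le p)
          (le_of_lt hpq)]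
    have hfinal : 0 ≤ ∑ t ∈ Finset.Ioc 0 K, (π t * w t / (Astar t) ^ 2) * (Astar t - A' t) := by
      rw [hdecomp, hsplit3]
      have h1 : 0 ≤ ∑ t ∈ Finset.Ioc 0 p, r t * (Astar t - A' t) :=
        Finset.sum_nonneg (fun t ht => by
          rw [Finset.mem_Ioc] at ht
          exact houtside t (by omega) (by omega) (Or.inl ht.2))
      have h2 : 0 ≤ ∑ t ∈ Finset.Ioc q K, r t * (Astar t - A' t) :=
        Finset.sum_nonneg (fun t ht => by
          rw [Finset.mem_Ioc] at ht
          exact houtside t (by omega) ht.2 (Or.inr ht.1))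
      linarith [hterm1, hblock]
    linarith [hconv, hfinal]
  -- assemble
  refine ⟨lam, hlampos.le, p + 1, q, by omega, by omega, hq1, hq2, Astar, ?_, ?_, hbudget,
    hopt, ?_, ?_, ?_⟩
  · intro t ht
    rw [Finset.mem_Icc] at ht
    exact ⟨hAstar_pos t ht.1 ht.2, hAstar_le1 t⟩
  · intro s hs t ht hst
    rw [Finset.mem_Icc] at hs ht
    exact hAstar_mono s t hs.1 hst ht.2
  · intro t ht htm
    rw [Finset.mem_Icc] at ht
    simp only [hAstardef]
    rw [show k t = L ^ 2 / c t from by simp only [hkdef]; rw [if_pos (by omega)]]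
    rw [div_div, mul_comm (c t) lam]
  · intro t ht h1 h2
    rw [Finset.mem_Icc] at ht
    rw [hvAstar t (by omega) h2, hvAstar tstar (by omega) hq1]
  · intro t ht htp
    rw [Finset.mem_Icc] at ht
    simp only [hAstardef]
    rw [show k t = U ^ 2 / c t from by
      simp only [hkdef]; rw [if_neg (by omega), if_neg (by omega)]]
    rw [div_div, mul_comm (c t) lam]
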